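/- Let p, k ≥ 1 be integers with p > 1, and for X, x > 0 set α_k(X,x) = (1/k!)(X^{1/p} - x^{1/p})^k, viewed as a function of X. Then for all natural numbers n and all x > 0, |∂^n_X α_k(X,x)|_{X=x}| ≤ (2e)^n · n^{n-k} · x^{-(pn-k)/p}. -/

import Mathlib

open Set Finset Nat

/-- recursion majorizing the iterated derivatives of `g^k` -/
noncomputable def alphaC : ℕ → ℕ → ℝ
  | n, 0 => if n = 0 then 1 else 0
  | n, (k+1) => ∑ i ∈ Finset.range n,
      (n.choose (i+1) : ℝ) * ((1:ℝ)/2 * (Nat.factorial i : ℝ)) * alphaC (n - (i+1)) k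

lemma alphaC_nonneg : ∀ k n, 0 ≤ alphaC n k := by
  intro k
  induction k with
  | zero => intro n; simp only [alphaC]; split <;> norm_num
  | succ k ih =>
    intro n
    simp only [alphaC]
    refine Finset.sum_nonneg fun i _ => ?_
    have := ih (n - (i+1))
    positivity

lemma alpha_hockey (k : ℕ) : ∀ n, (∑ m ∈ Finset.range n, (m.choose k)) = n.choose (k+1) := by
  intro n
  induction n with
  | zero => simp
  | succ n ih => rw [Finset.sum_range_succ, ih, Nat.choose_succ_succ']; omega

lemma alpha_fact_le {k n : ℕ} (h : k ≤ n) : n ! ≤ k ! * n ^ (n - k) := by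
  obtain ⟨d, rfl⟩ := Nat.exists_eq_add_of_le h
  clear h
  have hsub : ∀ d : ℕ, k + d - k = d := fun d => by omega
  induction d with
  | zero => simp
  | succ d ih =>
    have h2 : (k + d)! ≤ k ! * (k + d) ^ d := by
      have := ih; rw [hsub d] at this; exact this
    have h1 : k + (d + 1) = (k + d) + 1 := by omega
    rw [hsub (d+1), h1, Nat.factorial_succ]
    calc (k + d + 1) * (k + d)! ≤ (k + d + 1) * (k ! * (k + d) ^ d) :=
          Nat.mul_le_mul_left _ h2
      _ ≤ (k + d + 1) * (k ! * (k + d + 1) ^ d) := by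
          exact Nat.mul_le_mul_left _ (Nat.mul_le_mul_left _
            (Nat.pow_le_pow_left (by omega) d))
      _ = k ! * (k + d + 1) ^ (d + 1) := by ring

lemma alpha_choose_le_two_pow (n k : ℕ) : n.choose k ≤ 2 ^ n := by
  rcases le_or_gt k n with h | h
  · calc n.choose k ≤ ∑ i ∈ Finset.range (n+1), n.choose i :=
        Finset.single_le_sum (fun i _ => Nat.zero_le _) (by simp [Finset.mem_range]; omega)
    _ = 2 ^ n := Nat.sum_range_choose n
  · rw [Nat.choose_eq_zero_of_lt h]; positivity

lemma alphaC_le : ∀ k n, alphaC n k ≤ (n ! : ℝ) * (n.choose k) / 2 ^ k := by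
  intro k
  induction k with
  | zero =>
    intro n
    simp only [alphaC]
    split
    · subst ‹n = 0›; norm_num
    · positivity
  | succ k ih =>
    intro n
    simp only [alphaC]
    calc ∑ i ∈ Finset.range n,
        (n.choose (i+1) : ℝ) * ((1:ℝ)/2 * (Nat.factorial i : ℝ)) * alphaC (n - (i+1)) k
        ≤ ∑ i ∈ Finset.range n, (n ! : ℝ) * ((n - (i+1)).choose k) / 2 ^ (k+1) := by
          refine Finset.sum_le_sum fun i hi => ?_
          have hin : i + 1 ≤ n := Finset.mem_range.mp hi
          have key : (n.choose (i+1)) * (i !) * ((n - (i+1))!) * (i+1) = n ! := by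
            have := Nat.choose_mul_factorial_mul_factorial hin
            calc (n.choose (i+1)) * (i !) * ((n - (i+1))!) * (i+1)
                = (n.choose (i+1)) * ((i+1) * i !) * ((n - (i+1))!) := by ring
              _ = (n.choose (i+1)) * (i+1)! * ((n - (i+1))!) := by rw [Nat.factorial_succ]
              _ = n ! := this
          have key1 : (n.choose (i+1) : ℝ) * (i !) * ((n - (i+1))!) ≤ (n ! : ℝ) := by
            have h1 : (n.choose (i+1)) * (i !) * ((n - (i+1))!) ≤ n ! := by
              calc (n.choose (i+1)) * (i !) * ((n - (i+1))!)
                  ≤ (n.choose (i+1)) * (i !) * ((n - (i+1))!) * (i+1) :=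
                    Nat.le_mul_of_pos_right _ (Nat.succ_pos i)
                _ = n ! := key
            exact_mod_cast h1
          calc (n.choose (i+1) : ℝ) * ((1:ℝ)/2 * (i ! : ℝ)) * alphaC (n - (i+1)) k
              ≤ (n.choose (i+1) : ℝ) * ((1:ℝ)/2 * (i ! : ℝ)) *
                  (((n - (i+1))! : ℝ) * ((n - (i+1)).choose k) / 2 ^ k) := by
                refine mul_le_mul_of_nonneg_left (ih _) (by positivity)
            _ = ((n.choose (i+1) : ℝ) * (i !) * ((n - (i+1))!)) *
                  (((n - (i+1)).choose k) / 2 ^ (k+1)) := by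
                ring
            _ ≤ (n ! : ℝ) * (((n - (i+1)).choose k) / 2 ^ (k+1)) := by
                refine mul_le_mul_of_nonneg_right key1 (by positivity)
            _ = (n ! : ℝ) * ((n - (i+1)).choose k) / 2 ^ (k+1) := by ring
      _ = (n ! : ℝ) * (n.choose (k+1)) / 2 ^ (k+1) := by
          rw [← Finset.sum_div, ← Finset.mul_sum]
          have hnat : ∑ i ∈ Finset.range n, ((n - (i+1)).choose k) = n.choose (k+1) := by
            have h1 : ∀ i ∈ Finset.range n, (n - (i+1)).choose k
                = (fun m => m.choose k) (n - 1 - i) := by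
              intro i _; have : n - (i+1) = n - 1 - i := by omega
              simp [this]
            rw [Finset.sum_congr rfl h1, Finset.sum_range_reflect (fun m => m.choose k) n]
            exact alpha_hockey k n
          congr 2
          exact_mod_cast hnat

lemma alpha_prod_id (m : ℕ) : (∏ l ∈ Finset.range m, ((l : ℝ) + 1)) = (m ! : ℝ) := by
  induction m with
  | zero => simp
  | succ m ih => rw [Finset.prod_range_succ, ih, Nat.factorial_succ]; push_cast; ring

lemma alpha_contDiffOn_rpow (a : ℝ) {N : WithTop ℕ∞} :
    ContDiffOn ℝ N (fun X : ℝ => X ^ a) (Ioi (0:ℝ)) :=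
  fun _ hz => (Real.contDiffAt_rpow_const_of_ne (ne_of_gt hz)).contDiffWithinAt

lemma alpha_rpow_iter : ∀ m : ℕ, ∀ a : ℝ, ∀ y ∈ Ioi (0:ℝ),
    iteratedDerivWithin m (fun X : ℝ => X ^ a) (Ioi 0) y
      = (∏ l ∈ Finset.range m, (a - l)) * y ^ (a - m) := by
  intro m
  induction m with
  | zero => intro a y _; simp
  | succ m ih =>
    intro a y hy
    have hu : UniqueDiffOn ℝ (Ioi (0:ℝ)) := uniqueDiffOn_Ioi 0
    rw [iteratedDerivWithin_succ']
    have hEq : Set.EqOn (derivWithin (fun X : ℝ => X ^ a) (Ioi 0))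
        (fun X : ℝ => a * X ^ (a - 1)) (Ioi 0) := by
      intro z hz
      have hd : HasDerivWithinAt (fun X : ℝ => X ^ a) (a * z ^ (a-1)) (Ioi 0) z := by
        have := (Real.hasDerivAt_rpow_const (p := a) (Or.inl (ne_of_gt hz)))
        exact this.hasDerivWithinAt
      exact hd.derivWithin (hu z hz)
    rw [iteratedDerivWithin_congr hEq hy]
    rw [iteratedDerivWithin_const_mul hy hu a (alpha_contDiffOn_rpow (a-1) y hy)]
    rw [ih (a-1) y hy]
    have e1 : a - ((m+1 : ℕ) : ℝ) = a - 1 - m := by push_cast; ring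
    rw [show ((m+1 : ℕ) : ℝ) = ((m:ℝ)+1) by push_cast; ring]  -- may be defeq; keep safe
    rw [Finset.prod_range_succ']
    have e2 : ∀ l ∈ Finset.range m, (a - ((l+1 : ℕ):ℝ)) = (a - 1) - (l:ℝ) :=
      fun l _ => by push_cast; ring
    rw [Finset.prod_congr rfl e2]
    rw [show a - ((m:ℝ)+1) = a - 1 - (m:ℝ) by ring]
    push_cast
    ring

theorem alpha_k_deriv_bound (p k : ℕ) (hp : 1 < p) (hk : 1 ≤ k)
    (n : ℕ) (x : ℝ) (hx : 0 < x) :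
    |iteratedDeriv n
        (fun X : ℝ => (1 / (k.factorial : ℝ)) * (X ^ ((1 : ℝ) / p) - x ^ ((1 : ℝ) / p)) ^ k) x|
      ≤ (2 * Real.exp 1) ^ n * (n : ℝ) ^ ((n : ℝ) - k)
          * x ^ (-(((p : ℝ) * n - k) / p)) := by
  have hu : UniqueDiffOn ℝ (Ioi (0:ℝ)) := uniqueDiffOn_Ioi 0
  have hxs : x ∈ Ioi (0:ℝ) := hx
  have hp1 : (1:ℝ) < (p:ℝ) := by exact_mod_cast hp
  have hp0 : (0:ℝ) < (p:ℝ) := lt_trans one_pos hp1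
  have hpne : (p:ℝ) ≠ 0 := ne_of_gt hp0
  have hp2 : (2:ℝ) ≤ (p:ℝ) := by exact_mod_cast hp
  set P : ℝ := (1:ℝ)/(p:ℝ) with hPdef
  have hP0 : 0 < P := by positivity
  have hP2 : P ≤ 1/2 := by
    rw [hPdef]
    exact one_div_le_one_div_of_le (by norm_num) hp2
  set g : ℝ → ℝ := fun X => X ^ P - x ^ P with hgdef
  have hgCD : ∀ {N : WithTop ℕ∞}, ContDiffOn ℝ N g (Ioi 0) := by
    intro N
    exact (alpha_contDiffOn_rpow P).sub contDiffOn_const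
  have hgkCD : ∀ (j : ℕ) {N : WithTop ℕ∞}, ContDiffOn ℝ N (fun X => (g X)^j) (Ioi 0) :=
    fun j => hgCD.pow j
  have hgx : g x = 0 := by simp [hgdef]
  set D : ℕ → ℝ := fun i => if i = 0 then 0 else (1/2) * ((i-1)! : ℝ) with hDdef
  have hD0 : ∀ i, 0 ≤ D i := by
    intro i; rw [hDdef]; dsimp only; split <;> positivity
  have hDg : ∀ i : ℕ, |iteratedDerivWithin i g (Ioi 0) x| ≤ D i * x ^ (P - (i:ℝ)) := by
    intro i
    match i with
    | 0 =>
      simp only [iteratedDerivWithin_zero, hgx, abs_zero]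
      exact mul_nonneg (hD0 0) (le_of_lt (Real.rpow_pos_of_pos hx _))
    | (j+1) =>
      have hEq : Set.EqOn g (fun z : ℝ => (-(x ^ P)) + z ^ P) (Ioi 0) := by
        intro z _; rw [hgdef]; dsimp only; ring
      have h1 : iteratedDerivWithin (j+1) g (Ioi 0) x
          = iteratedDerivWithin (j+1) (fun z : ℝ => z ^ P) (Ioi 0) x := by
        rw [iteratedDerivWithin_congr hEq hxs]
        exact iteratedDerivWithin_const_add (Nat.succ_pos j) (-(x ^ P))
      rw [h1, alpha_rpow_iter (j+1) P x hxs, abs_mul,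
        abs_of_pos (Real.rpow_pos_of_pos hx (P - ((j+1:ℕ):ℝ)))]
      refine mul_le_mul_of_nonneg_right ?_ (le_of_lt (Real.rpow_pos_of_pos hx _))
      rw [Finset.abs_prod, Finset.prod_range_succ']
      have hstep : ∀ l ∈ Finset.range j, |P - (((l+1) : ℕ):ℝ)| ≤ ((l:ℝ)+1) := by
        intro l _
        rw [abs_of_nonpos (by push_cast; nlinarith)]
        push_cast; nlinarith
      calc (∏ l ∈ Finset.range j, |P - (((l+1) : ℕ):ℝ)|) * |P - ((0:ℕ):ℝ)|
          ≤ (∏ l ∈ Finset.range j, ((l:ℝ)+1)) * (1/2) := by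
            refine mul_le_mul ?_ ?_ (abs_nonneg _) ?_
            · exact Finset.prod_le_prod (fun l _ => abs_nonneg _) hstep
            · rw [Nat.cast_zero, sub_zero, abs_of_pos hP0]; exact hP2
            · exact Finset.prod_nonneg fun l _ => by positivity
        _ = D (j+1) := by
            rw [alpha_prod_id, hDdef]
            simp only [Nat.succ_ne_zero, if_false, Nat.add_sub_cancel]
            ring
  -- main induction
  have key : ∀ j : ℕ, ∀ m : ℕ, |iteratedDerivWithin m (fun X => (g X)^j) (Ioi 0) x|
      ≤ alphaC m j * x ^ ((j:ℝ)/(p:ℝ) - (m:ℝ)) := by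
    intro j
    induction j with
    | zero =>
      intro m
      have hone : (fun X : ℝ => (g X)^0) = fun _ : ℝ => (1:ℝ) := by funext X; simp
      rw [hone]
      match m with
      | 0 =>
        rw [iteratedDerivWithin_zero]
        have hce : ((0:ℕ):ℝ)/(p:ℝ) - ((0:ℕ):ℝ) = 0 := by norm_num
        rw [hce, Real.rpow_zero]
        norm_num [alphaC]
      | (m+1) =>
        have hz : iteratedDerivWithin (m+1) (fun _ : ℝ => (1:ℝ)) (Ioi 0) x = 0 := by
          have h0 : ‖iteratedFDerivWithin ℝ (m+1) (fun _ : ℝ => (1:ℝ)) (Ioi 0) x‖ = 0 := by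
            rw [iteratedFDerivWithin_const_of_ne (Nat.succ_ne_zero m) (1:ℝ) (Ioi (0:ℝ))]
            simp
          rw [norm_iteratedFDerivWithin_eq_norm_iteratedDerivWithin, Real.norm_eq_abs,
            abs_eq_zero] at h0
          exact h0
        rw [hz]
        simp only [abs_zero, alphaC, Nat.succ_ne_zero, if_false]
        rw [zero_mul]
    | succ j ih =>
      intro m
      have hsplit : (fun X : ℝ => (g X)^(j+1)) = fun X => g X * (g X)^j := by
        funext X; rw [_root_.pow_succ']
      rw [hsplit]
      have habs : |iteratedDerivWithin m (fun X => g X * (g X)^j) (Ioi 0) x|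
          = ‖iteratedFDerivWithin ℝ m (fun X => g X * (g X)^j) (Ioi 0) x‖ := by
        rw [norm_iteratedFDerivWithin_eq_norm_iteratedDerivWithin, Real.norm_eq_abs]
      rw [habs]
      have hlei := norm_iteratedFDerivWithin_mul_le (𝕜 := ℝ) (A := ℝ)
        (hgCD (N := ((⊤:ℕ∞) : WithTop ℕ∞))) (hgkCD j (N := ((⊤:ℕ∞) : WithTop ℕ∞))) hu hxs
        (n := m) (by exact_mod_cast (le_top : (m:ℕ∞) ≤ ⊤))
      refine hlei.trans ?_
      have hterm : ∀ i ∈ Finset.range (m+1),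
          (m.choose i : ℝ) * ‖iteratedFDerivWithin ℝ i g (Ioi 0) x‖ *
            ‖iteratedFDerivWithin ℝ (m-i) (fun X => (g X)^j) (Ioi 0) x‖
          ≤ (m.choose i : ℝ) * (D i * x ^ (P - (i:ℝ))) *
              (alphaC (m-i) j * x ^ ((j:ℝ)/(p:ℝ) - ((m-i:ℕ):ℝ))) := by
        intro i _
        have e1 : ‖iteratedFDerivWithin ℝ i g (Ioi 0) x‖ ≤ D i * x ^ (P - (i:ℝ)) := by
          rw [norm_iteratedFDerivWithin_eq_norm_iteratedDerivWithin, Real.norm_eq_abs]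
          exact hDg i
        have e2 : ‖iteratedFDerivWithin ℝ (m-i) (fun X => (g X)^j) (Ioi 0) x‖
            ≤ alphaC (m-i) j * x ^ ((j:ℝ)/(p:ℝ) - ((m-i:ℕ):ℝ)) := by
          rw [norm_iteratedFDerivWithin_eq_norm_iteratedDerivWithin, Real.norm_eq_abs]
          exact ih (m-i)
        have c0 : (0:ℝ) ≤ (m.choose i : ℝ) := by positivity
        have hDi := hD0 i
        refine mul_le_mul (mul_le_mul_of_nonneg_left e1 c0) e2 (norm_nonneg _) ?_
        have : (0:ℝ) < x ^ (P - (i:ℝ)) := Real.rpow_pos_of_pos hx _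
        positivity
      refine (Finset.sum_le_sum hterm).trans ?_
      rw [Finset.sum_range_succ']
      have hfirst : (m.choose 0 : ℝ) * (D 0 * x ^ (P - ((0:ℕ):ℝ))) *
          (alphaC (m-0) j * x ^ ((j:ℝ)/(p:ℝ) - ((m-0:ℕ):ℝ))) = 0 := by
        rw [hDdef]; simp
      rw [hfirst, add_zero]
      have hsum : ∀ i ∈ Finset.range m,
          (m.choose (i+1) : ℝ) * (D (i+1) * x ^ (P - ((i+1:ℕ):ℝ))) *
            (alphaC (m-(i+1)) j * x ^ ((j:ℝ)/(p:ℝ) - ((m-(i+1):ℕ):ℝ)))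
          = ((m.choose (i+1) : ℝ) * ((1:ℝ)/2 * (i ! : ℝ)) * alphaC (m-(i+1)) j)
              * x ^ (((j+1:ℕ):ℝ)/(p:ℝ) - (m:ℝ)) := by
        intro i hi
        have him : i + 1 ≤ m := Finset.mem_range.mp hi
        have hDi : D (i+1) = (1:ℝ)/2 * (i ! : ℝ) := by
          rw [hDdef]; simp only [Nat.succ_ne_zero, if_false, Nat.add_sub_cancel]
        have hcast : ((m - (i+1) : ℕ) : ℝ) = (m:ℝ) - ((i+1:ℕ):ℝ) := Nat.cast_sub him
        have hexp : (P - ((i+1:ℕ):ℝ)) + ((j:ℝ)/(p:ℝ) - ((m - (i+1) : ℕ):ℝ))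
            = ((j+1:ℕ):ℝ)/(p:ℝ) - (m:ℝ) := by
          rw [hcast, hPdef]
          push_cast
          field_simp
          ring
        rw [hDi]
        calc (m.choose (i+1) : ℝ) * ((1:ℝ)/2 * (i ! : ℝ) * x ^ (P - ((i+1:ℕ):ℝ))) *
              (alphaC (m-(i+1)) j * x ^ ((j:ℝ)/(p:ℝ) - ((m-(i+1):ℕ):ℝ)))
            = ((m.choose (i+1) : ℝ) * ((1:ℝ)/2 * (i ! : ℝ)) * alphaC (m-(i+1)) j)
                * (x ^ (P - ((i+1:ℕ):ℝ)) * x ^ ((j:ℝ)/(p:ℝ) - ((m-(i+1):ℕ):ℝ))) := by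
              ring
          _ = ((m.choose (i+1) : ℝ) * ((1:ℝ)/2 * (i ! : ℝ)) * alphaC (m-(i+1)) j)
                * x ^ (((j+1:ℕ):ℝ)/(p:ℝ) - (m:ℝ)) := by
              rw [← Real.rpow_add hx, hexp]
      rw [Finset.sum_congr rfl hsum, ← Finset.sum_mul]
      have hccdef : alphaC m (j+1) = ∑ i ∈ Finset.range m,
          (m.choose (i+1) : ℝ) * ((1:ℝ)/2 * (i ! : ℝ)) * alphaC (m - (i+1)) j := by
        simp only [alphaC]
      rw [← hccdef]
  -- assemble
  have hfun : (fun X : ℝ => (1 / (k ! : ℝ)) * (X ^ P - x ^ P) ^ k)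
      = (fun X : ℝ => (1 / (k ! : ℝ)) * (g X)^k) := by
    funext X; rw [hgdef]
  rw [hfun]
  have hglob : iteratedDeriv n (fun X : ℝ => (1/(k ! : ℝ)) * (g X)^k) x
      = iteratedDerivWithin n (fun X : ℝ => (1/(k ! : ℝ)) * (g X)^k) (Ioi 0) x := by
    have heq := iteratedFDerivWithin_of_isOpen (𝕜 := ℝ)
      (f := fun X : ℝ => (1/(k ! :ℝ)) * (g X)^k) n isOpen_Ioi hxs
    rw [iteratedDeriv_eq_iteratedFDeriv, iteratedDerivWithin_eq_iteratedFDerivWithin, heq]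
  rw [hglob]
  rw [iteratedDerivWithin_const_mul hxs hu (1/(k ! : ℝ)) (hgkCD k (N := (n : WithTop ℕ∞)) x hxs)]
  rw [abs_mul, abs_of_pos (show (0:ℝ) < 1/(k ! : ℝ) by positivity)]
  have hexp2 : -(((p:ℝ) * n - k)/(p:ℝ)) = (k:ℝ)/(p:ℝ) - (n:ℝ) := by
    field_simp
    ring
  rw [hexp2]
  have hxpow : (0:ℝ) < x ^ ((k:ℝ)/(p:ℝ) - (n:ℝ)) := Real.rpow_pos_of_pos hx _
  have main2 : (1/(k ! : ℝ)) * alphaC n k ≤ (2*Real.exp 1)^n * (n:ℝ) ^ ((n:ℝ) - (k:ℝ)) := by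
    rcases le_or_gt k n with hkn | hnk
    · have h1 : alphaC n k ≤ (n ! : ℝ) * (n.choose k)/2^k := alphaC_le k n
      have h2 : ((n !:ℕ) : ℝ) ≤ (k ! : ℝ) * (n:ℝ)^((n-k : ℕ)) := by
        exact_mod_cast alpha_fact_le hkn
      have h3 : ((n.choose k : ℕ):ℝ) ≤ 2^n := by
        exact_mod_cast alpha_choose_le_two_pow n k
      have hrw : (n:ℝ) ^ ((n:ℝ) - (k:ℝ)) = (n:ℝ) ^ ((n - k : ℕ)) := by
        rw [← Real.rpow_natCast (n:ℝ) (n-k), Nat.cast_sub hkn]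
      rw [hrw]
      set t : ℝ := (n:ℝ)^((n-k : ℕ)) with htdef
      have ht0 : 0 ≤ t := by positivity
      have he1 : (1:ℝ) ≤ Real.exp 1 ^ n := one_le_pow₀ (Real.one_le_exp (by norm_num))
      have hchain : (n ! : ℝ) * (n.choose k) ≤ (k ! : ℝ) * t * 2^n :=
        mul_le_mul h2 h3 (by positivity) (by positivity)
      have hkf : (0:ℝ) < (k ! : ℝ) := by positivity
      calc (1/(k ! : ℝ)) * alphaC n k
          ≤ (1/(k ! : ℝ)) * ((n ! : ℝ) * (n.choose k)/2^k) :=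
            mul_le_mul_of_nonneg_left h1 (by positivity)
        _ = ((n ! : ℝ) * (n.choose k)) / ((k ! : ℝ) * 2^k) := by ring
        _ ≤ ((k ! : ℝ) * t * 2^n) / ((k ! : ℝ) * 2^k) := by
            exact (div_le_div_iff_of_pos_right (by positivity)).mpr hchain
        _ = t * (2^n / 2^k) := by field_simp
        _ ≤ t * 2^n := by
            refine mul_le_mul_of_nonneg_left ?_ ht0
            exact div_le_self (by positivity) (one_le_pow₀ (by norm_num))
        _ ≤ t * (2^n * Real.exp 1 ^ n) := by
            refine mul_le_mul_of_nonneg_left ?_ ht0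
            nlinarith [pow_pos (show (0:ℝ) < 2 by norm_num) n]
        _ = (2*Real.exp 1)^n * t := by rw [mul_pow]; ring
    · have h0 : n.choose k = 0 := Nat.choose_eq_zero_of_lt hnk
      have h1 : alphaC n k ≤ 0 := by
        have := alphaC_le k n
        rw [h0] at this
        simpa using this
      have hzero : alphaC n k = 0 := le_antisymm h1 (alphaC_nonneg k n)
      rw [hzero, mul_zero]
      have : (0:ℝ) ≤ (n:ℝ) ^ ((n:ℝ) - (k:ℝ)) := Real.rpow_nonneg (by positivity) _
      positivity
  calc (1/(k ! : ℝ)) * |iteratedDerivWithin n (fun X => (g X)^k) (Ioi 0) x|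
      ≤ (1/(k ! : ℝ)) * (alphaC n k * x ^ ((k:ℝ)/(p:ℝ) - (n:ℝ))) :=
        mul_le_mul_of_nonneg_left (key k n) (by positivity)
    _ = ((1/(k ! : ℝ)) * alphaC n k) * x ^ ((k:ℝ)/(p:ℝ) - (n:ℝ)) := by ring
    _ ≤ ((2*Real.exp 1)^n * (n:ℝ) ^ ((n:ℝ) - (k:ℝ))) * x ^ ((k:ℝ)/(p:ℝ) - (n:ℝ)) :=
        mul_le_mul_of_nonneg_right main2 (le_of_lt hxpow)
    _ = (2*Real.exp 1)^n * (n:ℝ) ^ ((n:ℝ) - (k:ℝ)) * x ^ ((k:ℝ)/(p:ℝ) - (n:ℝ)) := by ring
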